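/- If φ is a skeleton of a strategy σ on a justified AJM game A, then φ• = σ, where φ• = { t | ∃ s ∈ φ, s ≈_A t }. -/
import Mathlib


/- Justified AJM games, after Abramsky's game semantics for access control. -/

namespace AJM

inductive Pol where
  | P
  | O
deriving DecidableEq

inductive QA where
  | Q
  | Ans
deriving DecidableEq

def Pol.flip : Pol → Pol
  | .P => .O
  | .O => .P

/-- Well-bracketed strings over moves (condition (p4)). -/
inductive WB {M : Type} (lab : M → Pol × QA) (just : M → Option M) : List M → Prop
  | nil : WB lab just []
  | wrap (a q : M) (u : List M) : (lab a).2 = QA.Ans → just a = some q →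
      WB lab just u → WB lab just (q :: (u ++ [a]))
  | append (u v : List M) : WB lab just u → WB lab just v → WB lab just (u ++ v)

/-- Conditions (p1)–(p5): Opponent starts, alternation, linearity,
well-bracketing, justifiers occur before their moves. -/
def ValidSeq {M : Type} (lab : M → Pol × QA) (just : M → Option M) (s : List M) : Prop :=
  (∀ m, s.head? = some m → (lab m).1 = Pol.O) ∧
  List.Chain' (fun m m' => (lab m).1 ≠ (lab m').1) s ∧
  s.Nodup ∧
  (∃ t, s <+: t ∧ WB lab just t) ∧
  (∀ s₁ m s₂, s = s₁ ++ m :: s₂ → ∀ m', just m = some m' → m' ∈ s₁)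

/-- A justified AJM game (the data). -/
structure Game where
  M : Type
  lab : M → Pol × QA
  just : M → Option M
  pos : Set (List M)
  equiv : List M → List M → Prop

namespace Game

/-- The axioms making the data of a `Game` an actual justified AJM game. -/
structure Valid (A : Game) : Prop where
  just_wf : WellFounded fun m m' : A.M => A.just m' = some m
  just_pol : ∀ m m', A.just m = some m' → (A.lab m).1 ≠ (A.lab m').1
  just_qa : ∀ m m', A.just m = some m' → (A.lab m).2 = QA.Ans → (A.lab m').2 = QA.Q
  ans_justified : ∀ m, (A.lab m).2 = QA.Ans → A.just m ≠ none
  pos_nonempty : A.pos.Nonempty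
  pos_prefix_closed : ∀ s t : List A.M, s <+: t → t ∈ A.pos → s ∈ A.pos
  pos_valid : ∀ s ∈ A.pos, ValidSeq A.lab A.just s
  equiv_mem : ∀ s t, A.equiv s t → s ∈ A.pos ∧ t ∈ A.pos
  equiv_refl : ∀ s ∈ A.pos, A.equiv s s
  equiv_symm : ∀ s t, A.equiv s t → A.equiv t s
  equiv_trans : ∀ s t u, A.equiv s t → A.equiv t u → A.equiv s u
  equiv_lab : ∀ s t, A.equiv s t → s.map A.lab = t.map A.lab
  equiv_prefix : ∀ s t s' t', A.equiv s t → s' <+: s → t' <+: t →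
      s'.length = t'.length → A.equiv s' t'
  equiv_ext : ∀ s t a, A.equiv s t → s ++ [a] ∈ A.pos → ∃ b, A.equiv (s ++ [a]) (t ++ [b])

/-- A strategy on a game: a non-empty set of even-length positions that is
causally consistent, representation independent and deterministic. -/
structure IsStrategy (A : Game) (σ : Set (List A.M)) : Prop where
  subset_pos : σ ⊆ A.pos
  even_length : ∀ s ∈ σ, Even s.length
  nonempty : σ.Nonempty
  causal : ∀ s a b, s ++ [a, b] ∈ σ → s ∈ σ
  repind : ∀ s t, s ∈ σ → A.equiv s t → t ∈ σ
  det : ∀ s t a b a' b', s ++ [a, b] ∈ σ → t ++ [a', b'] ∈ σ →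
      A.equiv (s ++ [a]) (t ++ [a']) → A.equiv (s ++ [a, b]) (t ++ [a', b'])

/-- A skeleton of a strategy `σ`: a non-empty, causally consistent subset of
`σ` satisfying Uniformization. -/
structure IsSkeletonOf (A : Game) (φ σ : Set (List A.M)) : Prop where
  nonempty : φ.Nonempty
  subset : φ ⊆ σ
  causal : ∀ s a b, s ++ [a, b] ∈ φ → s ∈ φ
  uniformization : ∀ s a b, s ++ [a, b] ∈ σ → s ∈ φ → ∃! b', s ++ [a, b'] ∈ φ

/-- A skeleton in the abstract sense (independently of any strategy):
a non-empty, causally consistent set of even-length positions satisfying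
Functional Determinacy and Functional Representation Independence. -/
structure IsSkeleton (A : Game) (φ : Set (List A.M)) : Prop where
  subset_pos : φ ⊆ A.pos
  even_length : ∀ s ∈ φ, Even s.length
  nonempty : φ.Nonempty
  causal : ∀ s a b, s ++ [a, b] ∈ φ → s ∈ φ
  funDet : ∀ s a b c, s ++ [a, b] ∈ φ → s ++ [a, c] ∈ φ → b = c
  funRepInd : ∀ s t a b a', s ++ [a, b] ∈ φ → t ∈ φ →
      A.equiv (s ++ [a]) (t ++ [a']) →
      ∃! b', t ++ [a', b'] ∈ φ ∧ A.equiv (s ++ [a, b]) (t ++ [a', b'])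

/-- `φ• = { t | ∃ s ∈ φ, s ≈_A t }`, the saturation of `φ` under `≈_A`. -/
def dot (A : Game) (φ : Set (List A.M)) : Set (List A.M) :=
  {t | ∃ s ∈ φ, A.equiv s t}

/-- The preorder `φ ⊑ ψ` on skeletons. -/
def Subeq (A : Game) (φ ψ : Set (List A.M)) : Prop :=
  ∀ s a b s' a', s ++ [a, b] ∈ φ → s' ∈ ψ → A.equiv (s ++ [a]) (s' ++ [a']) →
    ∃ b', s' ++ [a', b'] ∈ ψ ∧ A.equiv (s ++ [a, b]) (s' ++ [a', b'])

end Game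

end AJM

open AJM Game in
/-- If `φ` is a skeleton of a strategy `σ`, then `φ• = σ`. -/
theorem dot_of_skeletonOf (A : Game) (hA : A.Valid)
    (σ φ : Set (List A.M)) (hσ : IsStrategy A σ) (hφ : IsSkeletonOf A φ σ) :
    dot A φ = σ := by
  have hpos0 : ([] : List A.M) ∈ A.pos := by
    obtain ⟨p, hp⟩ := hA.pos_nonempty
    exact hA.pos_prefix_closed [] p List.nil_prefix hp
  have decomp : ∀ (s : List A.M), Even s.length → s = [] ∨ ∃ v a b, s = v ++ [a, b] := by
    intro s hs
    rcases s.eq_nil_or_concat with h | ⟨u, b, rfl⟩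
    · exact Or.inl h
    rcases u.eq_nil_or_concat with h | ⟨v, a, rfl⟩
    · subst h; simp [Nat.even_iff] at hs
    · exact Or.inr ⟨v, a, b, by simp⟩
  have hnilφ : ([] : List A.M) ∈ φ := by
    obtain ⟨s, hs⟩ := hφ.nonempty
    have key : ∀ n (s : List A.M), s.length = n → s ∈ φ → ([] : List A.M) ∈ φ := by
      intro n
      induction n using Nat.strong_induction_on with
      | _ n ih =>
        intro s hlen hsφ
        rcases decomp s (hσ.even_length s (hφ.subset hsφ)) with rfl | ⟨v, a, b, rfl⟩
        · exact hsφ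
        · exact ih v.length (by simp at hlen; omega) v rfl (hφ.causal v a b hsφ)
    exact key s.length s rfl hs
  have main : ∀ n (t : List A.M), t.length = n → t ∈ σ → ∃ s ∈ φ, A.equiv s t := by
    intro n
    induction n using Nat.strong_induction_on with
    | _ n ih =>
      intro t hlen ht
      rcases decomp t (hσ.even_length t ht) with rfl | ⟨v, a, b, rfl⟩
      · exact ⟨[], hnilφ, hA.equiv_refl [] hpos0⟩
      · have hv : v ∈ σ := hσ.causal v a b ht
        obtain ⟨s', hs'φ, hequ⟩ := ih v.length (by simp at hlen; omega) v rfl hv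
        have hequ' := hA.equiv_symm _ _ hequ
        have hposva : v ++ [a] ∈ A.pos :=
          hA.pos_prefix_closed _ _ ⟨[b], by simp⟩ (hσ.subset_pos ht)
        obtain ⟨a', ha'⟩ := hA.equiv_ext v s' a hequ' hposva
        have hposvab : (v ++ [a]) ++ [b] ∈ A.pos := by
          simpa using hσ.subset_pos ht
        obtain ⟨b'', hb''⟩ := hA.equiv_ext (v ++ [a]) (s' ++ [a']) b ha' hposvab
        have hs'ab'' : s' ++ [a', b''] ∈ σ := by
          have h1 : (v ++ [a]) ++ [b] ∈ σ := by simpa using ht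
          have := hσ.repind _ _ h1 hb''
          simpa using this
        obtain ⟨b', ⟨hb'φ, _⟩⟩ := hφ.uniformization s' a' b'' hs'ab'' hs'φ
        have hb'σ : s' ++ [a', b'] ∈ σ := hφ.subset hb'φ
        have hdet := hσ.det v s' a b a' b' ht hb'σ ha'
        exact ⟨s' ++ [a', b'], hb'φ, hA.equiv_symm _ _ hdet⟩
  ext t
  constructor
  · rintro ⟨s, hs, he⟩
    exact hσ.repind s t (hφ.subset hs) he
  · intro ht
    exact main t.length t rfl ht
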